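/- If L is regular, then L_{1/2} = {x | ∃y, |x| = |y| and xy ∈ L} (the set of first halves of words in L) is regular. -/
import Mathlib

lemma pre_iterate_mem {α : Type} {σ : Type} (M : DFA α σ) :
    ∀ (n : ℕ) (T : Set σ) (s : σ),
      s ∈ (fun T : Set σ => {s | ∃ a, M.step s a ∈ T})^[n] T ↔
        ∃ y : List α, y.length = n ∧ M.evalFrom s y ∈ T := by
  intro n
  induction n with
  | zero =>
    intro T s
    simp only [Function.iterate_zero, id_eq]
    constructor
    · intro hs; exact ⟨[], rfl, hs⟩
    · rintro ⟨y, hy, hs⟩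
      rw [List.length_eq_zero_iff.mp hy] at hs
      exact hs
  | succ n ih =>
    intro T s
    rw [Function.iterate_succ_apply']
    constructor
    · rintro ⟨a, ha⟩
      obtain ⟨y, hy, hs⟩ := (ih T (M.step s a)).mp ha
      exact ⟨a :: y, by simp [hy], hs⟩
    · rintro ⟨y, hy, hs⟩
      cases y with
      | nil => simp at hy
      | cons a y =>
        refine ⟨a, (ih T (M.step s a)).mpr ⟨y, by simpa using hy, hs⟩⟩

/-- If `L` is regular, then the language of first halves of words in `L` is regular. -/
theorem regular_firstHalf {α : Type} (L : Language α) (h : L.IsRegular) :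
    Language.IsRegular {x | ∃ y : List α, x.length = y.length ∧ x ++ y ∈ L} := by
  classical
  obtain ⟨σ, fσ, M, rfl⟩ := h
  set pre : Set σ → Set σ := fun T => {s | ∃ a, M.step s a ∈ T} with hpre
  let M' : DFA α (σ × Set σ) :=
    { step := fun p a => (M.step p.1 a, pre p.2)
      start := (M.start, M.accept)
      accept := {p | p.1 ∈ p.2} }
  refine ⟨σ × Set σ, inferInstance, M', ?_⟩
  have heval : ∀ (x : List α) (s : σ) (T : Set σ),
      M'.evalFrom (s, T) x = (M.evalFrom s x, pre^[x.length] T) := by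
    intro x
    induction x with
    | nil => intro s T; rfl
    | cons a x ih =>
      intro s T
      show M'.evalFrom (M.step s a, pre T) x = _
      rw [ih, List.length_cons, Function.iterate_succ_apply]
      rfl
  ext x
  rw [DFA.mem_accepts]
  show M'.evalFrom (M.start, M.accept) x ∈ M'.accept ↔ _
  rw [heval]
  show M.evalFrom M.start x ∈ pre^[x.length] M.accept ↔ _
  rw [pre_iterate_mem M x.length M.accept]
  constructor
  · rintro ⟨y, hy, hs⟩
    exact ⟨y, hy.symm, by rwa [DFA.mem_accepts, DFA.eval, M.evalFrom_of_append]⟩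
  · rintro ⟨y, hy, hs⟩
    exact ⟨y, hy.symm, by rwa [DFA.mem_accepts, DFA.eval, M.evalFrom_of_append] at hs⟩
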